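/- For $s \le t$ and $n \ge 1$, the hypercube $[s,t]^n$ equals the union over all permutations $\rho \in \Sigma_n$ of the permuted simplexes $\Delta_{s,t}^n\rho$. Consequently, for any integrable function $f : [s,t]^n \to \mathbb{R}$, $\sum_{\rho \in \Sigma_n} \int_{\Delta_{s,t}^n\rho} f = \int_{[s,t]^n} f$. -/

import Mathlib

open MeasureTheory

/-- The simplex `Δ_{s,t}^n`. -/
def simplex (s t : ℝ) (n : ℕ) : Set (Fin n → ℝ) :=
  {r | (∀ i, s ≤ r i ∧ r i ≤ t) ∧ ∀ i j : Fin n, i ≤ j → r i ≤ r j}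

/-- The permuted simplex `Δ_{s,t}^n ρ = {r : s ≤ r (ρ 0) ≤ ⋯ ≤ r (ρ (n-1)) ≤ t}`. -/
def permSimplex (s t : ℝ) (n : ℕ) (ρ : Equiv.Perm (Fin n)) : Set (Fin n → ℝ) :=
  {r | (fun i => r (ρ i)) ∈ simplex s t n}

lemma permSimplex_subset (s t : ℝ) (n : ℕ) (ρ : Equiv.Perm (Fin n)) :
    permSimplex s t n ρ ⊆ Set.univ.pi fun _ : Fin n => Set.Icc s t := by
  intro r hr i _
  have := hr.1 (ρ.symm i)
  simpa using this

lemma cube_eq_iUnion (s t : ℝ) (n : ℕ) :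
    (Set.univ.pi fun _ : Fin n => Set.Icc s t) = ⋃ ρ, permSimplex s t n ρ := by
  apply Set.Subset.antisymm
  · intro r hr
    refine Set.mem_iUnion.2 ⟨Tuple.sort r, ?_, ?_⟩
    · intro i
      exact ⟨(hr (Tuple.sort r i) trivial).1, (hr (Tuple.sort r i) trivial).2⟩
    · intro i j hij
      exact Tuple.monotone_sort r hij
  · exact Set.iUnion_subset (permSimplex_subset s t n)

lemma isClosed_permSimplex (s t : ℝ) (n : ℕ) (ρ : Equiv.Perm (Fin n)) :
    IsClosed (permSimplex s t n ρ) := by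
  have : permSimplex s t n ρ =
      (⋂ i, {r : Fin n → ℝ | s ≤ r (ρ i)} ∩ {r | r (ρ i) ≤ t}) ∩
      ⋂ (i) (j) (_ : i ≤ j), {r : Fin n → ℝ | r (ρ i) ≤ r (ρ j)} := by
    ext r
    simp only [permSimplex, simplex, Set.mem_setOf_eq, Set.mem_inter_iff, Set.mem_iInter]
  rw [this]
  apply IsClosed.inter
  · exact isClosed_iInter fun i => IsClosed.inter
      (isClosed_le continuous_const (continuous_apply (ρ i)))
      (isClosed_le (continuous_apply (ρ i)) continuous_const)
  · exact isClosed_iInter fun i => isClosed_iInter fun j => isClosed_iInter fun _ =>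
      isClosed_le (continuous_apply (ρ i)) (continuous_apply (ρ j))

lemma volume_eq_pair (n : ℕ) (a b : Fin n) (hab : a ≠ b) :
    volume {r : Fin n → ℝ | r a = r b} = 0 := by
  have heq : {r : Fin n → ℝ | r a = r b} =
      (LinearMap.ker ((LinearMap.proj a : (Fin n → ℝ) →ₗ[ℝ] ℝ) - LinearMap.proj b) : Set _) := by
    ext r
    simp [LinearMap.mem_ker, sub_eq_zero]
  rw [heq]
  apply Measure.addHaar_submodule
  simp only [Ne, Submodule.eq_top_iff']
  push_neg
  refine ⟨Pi.single a 1, ?_⟩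
  simp [LinearMap.mem_ker, Pi.single_apply, hab, hab.symm]

lemma permSimplex_aedisjoint (s t : ℝ) (n : ℕ) :
    Pairwise (Function.onFun (AEDisjoint volume) fun ρ : Equiv.Perm (Fin n) => permSimplex s t n ρ) := by
  intro ρ σ hρσ
  have hsub : permSimplex s t n ρ ∩ permSimplex s t n σ ⊆
      ⋃ (p : Fin n × Fin n) (_ : p.1 ≠ p.2), {r : Fin n → ℝ | r p.1 = r p.2} := by
    rintro r ⟨hρ, hσ⟩
    have h1 : Monotone (r ∘ ρ) := fun i j h => hρ.2 i j h
    have h2 : Monotone (r ∘ σ) := fun i j h => hσ.2 i j h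
    have heq : r ∘ ρ = r ∘ σ := Tuple.unique_monotone h1 h2
    obtain ⟨k, hk⟩ : ∃ k, ρ k ≠ σ k := by
      by_contra h
      push_neg at h
      exact hρσ (Equiv.ext h)
    exact Set.mem_iUnion.2 ⟨(ρ k, σ k), Set.mem_iUnion.2 ⟨hk, congrFun heq k⟩⟩
  refine measure_mono_null hsub (measure_iUnion_null fun p => measure_iUnion_null fun hp => ?_)
  exact volume_eq_pair n p.1 p.2 hp

/-- the hypercube `[s,t]^n` is the union of all permuted simplexes, and
for any integrable `f`, the sum of the integrals of `f` over the permuted simplexes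
equals the integral of `f` over the hypercube. -/
theorem stmt2 (s t : ℝ) (hst : s ≤ t) (n : ℕ) (hn : 1 ≤ n) (f : (Fin n → ℝ) → ℝ)
    (hf : IntegrableOn f (Set.univ.pi fun _ : Fin n => Set.Icc s t)) :
    ((Set.univ.pi fun _ : Fin n => Set.Icc s t) =
      ⋃ ρ : Equiv.Perm (Fin n), permSimplex s t n ρ) ∧
    (∑ ρ : Equiv.Perm (Fin n), ∫ r in permSimplex s t n ρ, f r =
      ∫ r in Set.univ.pi fun _ : Fin n => Set.Icc s t, f r) := by
  have hcover := cube_eq_iUnion s t n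
  refine ⟨hcover, ?_⟩
  rw [hcover] at hf ⊢
  rw [integral_iUnion_ae
    (fun ρ => (isClosed_permSimplex s t n ρ).measurableSet.nullMeasurableSet)
    (permSimplex_aedisjoint s t n) hf]
  exact (tsum_fintype _).symm
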